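/- arXiv:2204.04389 — 5 statements merged into one kernel-verified Lean document; each statement's English description precedes it below -/
import Mathlib

section
/- Let G be an abelian topological group, A a subset of the character group Ĝ containing 0, n a positive integer, and g ∈ G. Then g belongs to the inverse polar ((n)A)^◁ (i.e., (χ₁+⋯+χₙ)(g) ∈ S₊ for all χ₁,…,χₙ ∈ A) if and only if χ(g) ∈ Sₙ = {z ∈ S : arg(z) ∈ [−π/(2n), π/(2n)]} for every χ ∈ A. -/
open scoped Pointwise Topology
open Complex Real

variable (G : Type*) [AddCommGroup G] [TopologicalSpace G] [IsTopologicalAddGroup G]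

/-- A (continuous) character of `G` with values in the circle group. -/
def IsChar (χ : G → Circle) : Prop :=
  Continuous χ ∧ ∀ x y : G, χ (x + y) = χ x * χ y

/-- `S₊ = {z ∈ S : Re z ≥ 0}`. -/
def Splus : Set Circle := {z | 0 ≤ (z : ℂ).re}

/-- The character group `Ĝ`, as a set of functions `G → Circle`. -/
def charSet : Set (G → Circle) := {χ | IsChar G χ}

/-- The inverse polar `B^◁ = {g ∈ G : χ(g) ∈ S₊ ∀ χ ∈ B}` of a set of characters. -/
def invPolar (B : Set (G → Circle)) : Set G := {g | ∀ χ ∈ B, χ g ∈ Splus}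

/-- The polar `A^▷ = {χ ∈ Ĝ : χ(A) ⊆ S₊}` of a subset of `G`. -/
def polarG (A : Set G) : Set (G → Circle) := {χ | IsChar G χ ∧ ∀ g ∈ A, χ g ∈ Splus}

/-- The `n`-fold sumset `(n)K` of a set of characters (written multiplicatively). -/
def mpow (K : Set (G → Circle)) : ℕ → Set (G → Circle)
  | 0 => {1}
  | n + 1 => mpow K n * K

/-- The `n`-fold sumset `(n)A` of a subset of `G`. -/
def addPow (A : Set G) : ℕ → Set G
  | 0 => {0}
  | n + 1 => addPow A n + A

/-- `C₍ₙ₎ = {g ∈ G : g, 2g, …, ng ∈ C}`. -/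
def seg (n : ℕ) (C : Set G) : Set G := {g | ∀ k ∈ Finset.Icc 1 n, k • g ∈ C}

/-- `Sₙ = {z ∈ S : arg z ∈ [-π/(2n), π/(2n)]}`. -/
def Sn (n : ℕ) : Set Circle := {z | Complex.arg (z : ℂ) ∈ Set.Icc (-(π / (2 * n))) (π / (2 * n))}



/-- If all powers `z^k`, `k = 1..n`, have nonnegative real part, then `|arg z| ≤ π/(2n)`. -/
lemma aux_arg_le (n : ℕ) (hn : 0 < n) (z : Circle)
    (h : ∀ k ∈ Finset.Icc 1 n, 0 ≤ ((z ^ k : Circle) : ℂ).re) :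
    |Complex.arg (z : ℂ)| ≤ π / (2 * n) := by
  by_contra hc
  push_neg at hc
  set θ : ℝ := |Complex.arg (z : ℂ)| with hθ
  have hθpos : 0 < θ := lt_trans (by positivity) hc
  have hθle : θ ≤ π := abs_le.mpr ⟨(Complex.neg_pi_lt_arg _).le, Complex.arg_le_pi _⟩
  have hre : ∀ k : ℕ, ((z ^ k : Circle) : ℂ).re = Real.cos (k * θ) := by
    intro k
    have h1 : ((z ^ k : Circle) : ℂ) = (z : ℂ) ^ k := rfl
    have h2 : (z : ℂ) = Complex.exp (Complex.arg (z : ℂ) * Complex.I) := by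
      conv_lhs => rw [← Circle.exp_arg z]
      exact Circle.coe_exp _
    rw [h1, h2, ← Complex.exp_nat_mul]
    have : ((k : ℂ) * (Complex.arg (z : ℂ) * Complex.I)) =
        ((k * Complex.arg (z : ℂ) : ℝ) : ℂ) * Complex.I := by push_cast; ring
    rw [this, Complex.exp_ofReal_mul_I_re, ← Real.cos_abs, abs_mul, Nat.abs_cast, hθ]
  -- find k with cos (k θ) < 0
  obtain ⟨k, hk1, hkn, hneg⟩ : ∃ k, 1 ≤ k ∧ k ≤ n ∧ Real.cos (k * θ) < 0 := by
    rcases eq_or_lt_of_le hθle with hpi | hpi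
    · exact ⟨1, le_refl 1, hn, by simp [hpi, Real.cos_pi]⟩
    · refine ⟨⌊π / (2 * θ)⌋₊ + 1, le_add_self, ?_, ?_⟩
      · have hflt : (π / (2 * θ) : ℝ) < n := by
          rw [div_lt_iff₀ (by positivity)]
          have := hc
          rw [div_lt_iff₀ (by positivity : (0:ℝ) < 2 * n)] at this
          linarith
        have : ⌊π / (2 * θ)⌋₊ < n := Nat.floor_lt (by positivity) |>.mpr hflt
        omega
      · have hfl : (⌊π / (2 * θ)⌋₊ : ℝ) * θ ≤ π / 2 := by
          have := Nat.floor_le (show (0:ℝ) ≤ π / (2 * θ) by positivity)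
          calc (⌊π / (2 * θ)⌋₊ : ℝ) * θ ≤ (π / (2 * θ)) * θ := by
                exact mul_le_mul_of_nonneg_right this hθpos.le
            _ = π / 2 := by field_simp
        have hgt : π / 2 < ((⌊π / (2 * θ)⌋₊ : ℝ) + 1) * θ := by
          have := Nat.lt_floor_add_one (π / (2 * θ))
          calc π / 2 = (π / (2 * θ)) * θ := by field_simp
            _ < ((⌊π / (2 * θ)⌋₊ : ℝ) + 1) * θ := by
                exact mul_lt_mul_of_pos_right this hθpos
        have hlt : ((⌊π / (2 * θ)⌋₊ : ℝ) + 1) * θ < π + π / 2 := by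
          have : ((⌊π / (2 * θ)⌋₊ : ℝ) + 1) * θ = (⌊π / (2 * θ)⌋₊ : ℝ) * θ + θ := by ring
          rw [this]; linarith
        have := Real.cos_neg_of_pi_div_two_lt_of_lt (x := ((⌊π / (2 * θ)⌋₊ : ℝ) + 1) * θ) hgt hlt
        convert this using 3
        push_cast; ring
  have := h k (Finset.mem_Icc.mpr ⟨hk1, hkn⟩)
  rw [hre k] at this
  linarith


lemma mem_mpow_pow (A : Set (G → Circle)) (h1 : (1 : G → Circle) ∈ A) {χ : G → Circle}
    (hχ : χ ∈ A) : ∀ n k : ℕ, k ≤ n → χ ^ k ∈ mpow G A n := by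
  intro n
  induction n with
  | zero => intro k hk; interval_cases k; simp [mpow]
  | succ m ih =>
    intro k hk
    rcases Nat.lt_or_ge k (m + 1) with h | h
    · have : χ ^ k = χ ^ k * 1 := by rw [mul_one]
      rw [this]
      exact Set.mul_mem_mul (ih k (Nat.lt_succ_iff.mp h)) h1
    · have hk' : k = m + 1 := le_antisymm hk h
      subst hk'
      rw [pow_succ]
      exact Set.mul_mem_mul (ih m le_rfl) hχ

lemma mem_mpow_exp (A : Set (G → Circle)) (g : G) (c : ℝ) (hc : 0 ≤ c)
    (hS : ∀ χ ∈ A, |Complex.arg ((χ g : Circle) : ℂ)| ≤ c) :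
    ∀ m : ℕ, ∀ ψ ∈ mpow G A m, ∃ θ : ℝ, |θ| ≤ m * c ∧ (ψ g : Circle) = Circle.exp θ := by
  intro m
  induction m with
  | zero =>
    intro ψ hψ
    simp only [mpow, Set.mem_singleton_iff] at hψ
    subst hψ
    exact ⟨0, by simp, by simp [Circle.exp_zero]⟩
  | succ m ih =>
    intro ψ hψ
    obtain ⟨φ, hφ, χ, hχ, rfl⟩ := hψ
    obtain ⟨θ₁, hθ₁, hφg⟩ := ih φ hφ
    refine ⟨θ₁ + Complex.arg ((χ g : Circle) : ℂ), ?_, ?_⟩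
    · have := hS χ hχ
      have habs := abs_add_le θ₁ (Complex.arg ((χ g : Circle) : ℂ))
      push_cast
      calc |θ₁ + Complex.arg ((χ g : Circle) : ℂ)| ≤ |θ₁| + |Complex.arg ((χ g : Circle) : ℂ)| :=
            habs
        _ ≤ m * c + c := add_le_add hθ₁ this
        _ = (m + 1) * c := by ring
    · show φ g * χ g = _
      rw [hφg, Circle.exp_add, Circle.exp_arg]

theorem stmt0 (A : Set (G → Circle)) (hA : A ⊆ charSet G) (hA0 : (1 : G → Circle) ∈ A)
    (n : ℕ) (hn : 0 < n) (g : G) :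
    g ∈ invPolar G (mpow G A n) ↔ ∀ χ ∈ A, χ g ∈ Sn n := by
  constructor
  · intro hg χ hχ
    have hpow : ∀ k ∈ Finset.Icc 1 n, 0 ≤ ((χ g ^ k : Circle) : ℂ).re := by
      intro k hk
      rw [Finset.mem_Icc] at hk
      have hmem : χ ^ k ∈ mpow G A n := mem_mpow_pow G A hA0 hχ n k hk.2
      have := hg (χ ^ k) hmem
      simpa [Splus] using this
    have := aux_arg_le n hn (χ g) hpow
    rw [abs_le] at this
    exact ⟨by linarith [this.1], this.2⟩
  · intro hS ψ hψ
    have hc : (0:ℝ) ≤ π / (2 * n) := by positivity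
    have hS' : ∀ χ ∈ A, |Complex.arg ((χ g : Circle) : ℂ)| ≤ π / (2 * n) := by
      intro χ hχ
      have := hS χ hχ
      rw [abs_le]
      exact ⟨by linarith [this.1], this.2⟩
    obtain ⟨θ, hθ, hψg⟩ := mem_mpow_exp G A g _ hc hS' n ψ hψ
    have hθ' : |θ| ≤ π / 2 := by
      have hne : (n : ℝ) ≠ 0 := Nat.cast_ne_zero.mpr hn.ne'
      calc |θ| ≤ n * (π / (2 * n)) := hθ
        _ = π / 2 := by field_simp
    rw [abs_le] at hθ'
    show 0 ≤ ((ψ g : Circle) : ℂ).re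
    rw [hψg, Circle.coe_exp, Complex.exp_ofReal_mul_I_re]
    exact Real.cos_nonneg_of_mem_Icc ⟨hθ'.1, hθ'.2⟩
end

section
/- Let G be an abelian topological group, A ⊆ Ĝ with 0 ∈ A, and n a positive integer. Then (A^◁)₍ₙ₎ = ((n)A)^◁, where C₍ₙ₎ = {g ∈ G : g, 2g, …, ng ∈ C}. Consequently, the intersection ⋂ₙ (A^◁)₍ₙ₎ over all positive integers n is a subgroup of G. -/
open scoped Pointwise Topology
open Complex Real

variable (G : Type*) [AddCommGroup G] [TopologicalSpace G] [IsTopologicalAddGroup G]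

omit [TopologicalSpace G] [IsTopologicalAddGroup G] in
/-- A character maps `0` to `1`. -/
lemma char_map_zero {χ : G → Circle} (h : ∀ x y : G, χ (x + y) = χ x * χ y) :
    χ 0 = 1 := by
  have h0 := h 0 0
  rw [add_zero] at h0
  exact (left_eq_mul.mp h0)

omit [TopologicalSpace G] [IsTopologicalAddGroup G] in
/-- A character maps `k • g` to `χ g ^ k`. -/
lemma char_map_nsmul {χ : G → Circle} (h : ∀ x y : G, χ (x + y) = χ x * χ y)
    (g : G) (k : ℕ) : χ (k • g) = χ g ^ k := by
  induction k with
  | zero => simpa using char_map_zero G h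
  | succ m ih => rw [succ_nsmul, h, ih, pow_succ]

/-- If all powers `z^k`, `1 ≤ k ≤ n`, have nonnegative real part, then
`|arg z| ≤ π / (2n)`. -/
lemma abs_arg_le_of_pow_re_nonneg {z : ℂ} (hz : ‖z‖ = 1) {n : ℕ} (hn : 0 < n)
    (h : ∀ k : ℕ, 1 ≤ k → k ≤ n → 0 ≤ (z ^ k).re) :
    |Complex.arg z| ≤ π / (2 * n) := by
  have hzeq : z = Complex.exp (Complex.arg z * Complex.I) := by
    conv_lhs => rw [← Complex.norm_mul_exp_arg_mul_I z]
    rw [hz]; simp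
  have hcos : ∀ k : ℕ, 1 ≤ k → k ≤ n → 0 ≤ Real.cos (k * |Complex.arg z|) := by
    intro k hk1 hk2
    have : (z ^ k).re = Real.cos (k * Complex.arg z) := by
      conv_lhs => rw [hzeq]
      rw [← Complex.exp_nat_mul]
      rw [show ((k : ℂ) * ((Complex.arg z : ℂ) * Complex.I)) =
        (((k : ℝ) * Complex.arg z : ℝ) : ℂ) * Complex.I by push_cast; ring]
      exact Complex.exp_ofReal_mul_I_re _
    have hre := h k hk1 hk2
    rw [this] at hre
    rwa [show (k : ℝ) * |Complex.arg z| = |(k : ℝ) * Complex.arg z| by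
      rw [abs_mul, Nat.abs_cast], Real.cos_abs]
  set φ := |Complex.arg z| with hφdef
  by_contra hcon
  push_neg at hcon
  have hπ := Real.pi_pos
  have hφpos : 0 < φ := lt_trans (by positivity) hcon
  have hφle : φ ≤ π := Complex.abs_arg_le_pi z
  set k : ℕ := ⌊(π / 2) / φ⌋₊ + 1 with hkdef
  have hk1 : 1 ≤ k := Nat.le_add_left 1 _
  have hxnn : (0:ℝ) ≤ (π / 2) / φ := by positivity
  have hkn : k ≤ n := by
    have : (π / 2) / φ < n := by
      rw [div_lt_iff₀ hφpos]
      have h1 : π / (2 * n) < φ := hcon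
      have hn' : (0:ℝ) < n := by exact_mod_cast hn
      rw [div_lt_iff₀ (by positivity)] at h1
      nlinarith
    have := (Nat.floor_lt hxnn).mpr this
    omega
  have hklb : π / 2 < k * φ := by
    have h0 := Nat.lt_floor_add_one ((π / 2) / φ)
    have h1 : (π / 2) / φ < (k : ℝ) := by
      rw [hkdef]; push_cast; exact h0
    rw [div_lt_iff₀ hφpos] at h1
    nlinarith
  have hkub : (k : ℝ) * φ < π + π / 2 := by
    have hfl : (⌊(π / 2) / φ⌋₊ : ℝ) * φ ≤ π / 2 := by
      have := Nat.floor_le hxnn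
      calc (⌊(π / 2) / φ⌋₊ : ℝ) * φ ≤ ((π / 2) / φ) * φ := by
            exact mul_le_mul_of_nonneg_right this hφpos.le
        _ = π / 2 := div_mul_cancel₀ _ hφpos.ne'
    rcases lt_or_eq_of_le hφle with hlt | heq
    · have : (k : ℝ) * φ = (⌊(π / 2) / φ⌋₊ : ℝ) * φ + φ := by
        rw [hkdef]; push_cast; ring
      rw [this]; linarith
    · -- φ = π, so floor ((π/2)/π) = 0, k = 1
      have : ⌊(π / 2) / φ⌋₊ = 0 := by
        apply Nat.floor_eq_zero.mpr
        rw [← heq] at *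
        rw [div_lt_one hφpos]
        linarith
      rw [hkdef, this]
      push_cast
      rw [← heq]
      linarith
  have := Real.cos_neg_of_pi_div_two_lt_of_lt hklb hkub
  have := hcos k hk1 hkn
  linarith

theorem stmt5 (A : Set (G → Circle)) (hA : A ⊆ charSet G)
    (hA0 : (1 : G → Circle) ∈ A) :
    (∀ n : ℕ, 0 < n → seg G n (invPolar G A) = invPolar G (mpow G A n)) ∧
      ∃ H : AddSubgroup G,
        (H : Set G) = ⋂ (n : ℕ) (_ : 0 < n), seg G n (invPolar G A) := by
  -- powers of elements of A lie in mpow A n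
  have hpow_mem : ∀ (χ : G → Circle), χ ∈ A → ∀ n k : ℕ, k ≤ n → χ ^ k ∈ mpow G A n := by
    intro χ hχ n
    induction n with
    | zero => intro k hk; interval_cases k; simp [mpow]
    | succ m ih =>
      intro k hk
      rcases Nat.lt_or_ge k (m + 1) with h | h
      · have : χ ^ k ∈ mpow G A m := ih k (by omega)
        have : χ ^ k * 1 ∈ mpow G A m * A := Set.mul_mem_mul this hA0
        simpa [mpow] using this
      · have hk' : k = m + 1 := le_antisymm hk h
        subst hk'
        have : χ ^ m ∈ mpow G A m := ih m le_rfl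
        have : χ ^ m * χ ∈ mpow G A m * A := Set.mul_mem_mul this hχ
        simpa [mpow, pow_succ] using this
  -- main equality
  have main : ∀ n : ℕ, 0 < n → seg G n (invPolar G A) = invPolar G (mpow G A n) := by
    intro n hn
    ext g
    simp only [seg, invPolar, Set.mem_setOf_eq, Finset.mem_Icc]
    constructor
    · intro hg ψ hψ
      -- each character χ ∈ A has |arg (χ g)| ≤ π/(2n)
      have harg : ∀ χ ∈ A, |Complex.arg ((χ g : ℂ))| ≤ π / (2 * n) := by
        intro χ hχ
        apply abs_arg_le_of_pow_re_nonneg (Circle.norm_coe _) hn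
        intro k hk1 hk2
        have h1 := hg k ⟨hk1, hk2⟩ χ hχ
        have h2 := char_map_nsmul G (hA hχ).2 g k
        rw [h2] at h1
        exact h1
      -- inductive representation of elements of mpow A m
      have key : ∀ m : ℕ, ∀ ψ ∈ mpow G A m, ∃ θ : ℝ,
          |θ| ≤ m * (π / (2 * n)) ∧ (ψ g : ℂ) = Complex.exp (θ * Complex.I) := by
        intro m
        induction m with
        | zero =>
          intro ψ hψ
          simp only [mpow, Set.mem_singleton_iff] at hψ
          subst hψ
          exact ⟨0, by simp, by simp⟩
        | succ m ih =>
          intro ψ hψ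
          simp only [mpow] at hψ
          obtain ⟨ψ', hψ', χ, hχ, rfl⟩ := hψ
          obtain ⟨θ, hθle, hθeq⟩ := ih ψ' hψ'
          refine ⟨θ + Complex.arg (χ g), ?_, ?_⟩
          · have := harg χ hχ
            have h1 := abs_add_le θ (Complex.arg ((χ g : ℂ)))
            push_cast
            nlinarith [Real.pi_pos, abs_nonneg θ]
          · have hcg : (χ g : ℂ) = Complex.exp (Complex.arg ((χ g : ℂ)) * Complex.I) := by
              conv_lhs => rw [← Complex.norm_mul_exp_arg_mul_I (χ g : ℂ)]
              rw [Circle.norm_coe]; simp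
            show ((ψ' g : ℂ) * (χ g : ℂ)) = _
            rw [show (((θ + Complex.arg ((χ g : ℂ)) : ℝ) : ℂ)) * Complex.I =
              (θ : ℂ) * Complex.I + (Complex.arg ((χ g : ℂ)) : ℂ) * Complex.I by push_cast; ring,
              Complex.exp_add, ← hθeq, ← hcg]
      obtain ⟨θ, hθle, hθeq⟩ := key n ψ hψ
      have hθ2 : |θ| ≤ π / 2 := by
        have hn' : (0:ℝ) < n := by exact_mod_cast hn
        calc |θ| ≤ n * (π / (2 * n)) := hθle
          _ = π / 2 := by field_simp
      show 0 ≤ ((ψ g : ℂ)).re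
      rw [hθeq, Complex.exp_ofReal_mul_I_re]
      rw [abs_le] at hθ2
      exact Real.cos_nonneg_of_neg_pi_div_two_le_of_le (by linarith [hθ2.1]) hθ2.2
    · intro hg k hk χ hχ
      have h1 := hg (χ ^ k) (hpow_mem χ hχ n k hk.2)
      have h2 := char_map_nsmul G (hA hχ).2 g k
      rw [h2]
      exact h1
  refine ⟨main, ?_⟩
  -- the intersection equals {g | ∀ χ ∈ A, χ g = 1}, which is a subgroup
  have hker : ∀ g : G, (∀ (n : ℕ), 0 < n → g ∈ seg G n (invPolar G A)) ↔ ∀ χ ∈ A, χ g = 1 := by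
    intro g
    constructor
    · intro hg χ hχ
      have hargn : ∀ n : ℕ, 0 < n → |Complex.arg ((χ g : ℂ))| ≤ π / (2 * n) := by
        intro n hn
        apply abs_arg_le_of_pow_re_nonneg (Circle.norm_coe _) hn
        intro k hk1 hk2
        have h1 := hg n hn k (Finset.mem_Icc.mpr ⟨hk1, hk2⟩) χ hχ
        have h2 := char_map_nsmul G (hA hχ).2 g k
        rw [h2] at h1
        exact h1
      have hzero : Complex.arg ((χ g : ℂ)) = 0 := by
        by_contra hne
        have hpos : 0 < |Complex.arg ((χ g : ℂ))| := abs_pos.mpr hne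
        obtain ⟨n, hn⟩ := exists_nat_gt (π / (2 * |Complex.arg ((χ g : ℂ))|))
        have hn1 : π / (2 * |Complex.arg ((χ g : ℂ))|) < ((n + 1 : ℕ) : ℝ) := by
          push_cast at hn ⊢; linarith
        have hb := hargn (n + 1) (Nat.succ_pos n)
        have hm : (0:ℝ) < ((n + 1 : ℕ) : ℝ) := by positivity
        rw [div_lt_iff₀ (by positivity)] at hn1
        have : π / (2 * ((n + 1 : ℕ) : ℝ)) < |Complex.arg ((χ g : ℂ))| := by
          rw [div_lt_iff₀ (by positivity)]
          nlinarith
        linarith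
      apply Circle.ext
      have := Complex.norm_mul_exp_arg_mul_I ((χ g : ℂ))
      rw [hzero, Circle.norm_coe] at this
      simpa using this.symm
    · intro hg n hn k hk
      intro χ hχ
      have h2 := char_map_nsmul G (hA hχ).2 g k
      unfold Splus
      show 0 ≤ ((χ (k • g) : ℂ)).re
      rw [h2, hg χ hχ]
      simp
  refine ⟨{ carrier := {g : G | ∀ χ ∈ A, χ g = 1}
            add_mem' := ?_
            zero_mem' := ?_
            neg_mem' := ?_ }, ?_⟩
  · intro a b ha hb χ hχ
    rw [(hA hχ).2, ha χ hχ, hb χ hχ, one_mul]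
  · intro χ hχ
    exact char_map_zero G (hA hχ).2
  · intro a ha χ hχ
    have h0 : χ (-a + a) = χ (-a) * χ a := (hA hχ).2 _ _
    rw [neg_add_cancel, char_map_zero G (hA hχ).2, ha χ hχ, mul_one] at h0
    exact h0.symm
  · ext g
    simp only [AddSubgroup.coe_set_mk, Set.mem_setOf_eq, Set.mem_iInter]
    exact (hker g).symm
end

section
/- Let G be an abelian topological group and C ⊆ G a quasi-convex subset. Then for every positive integer n: (a) the set C₍ₙ₎ = {g : g, 2g, …, ng ∈ C} is quasi-convex; (b) C₍₂ₙ₎ + C₍₂ₙ₎ ⊆ C₍ₙ₎; and (c) ⋂ₙ C₍ₙ₎ is a subgroup of G. -/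
open scoped Pointwise Topology
open Complex Real

variable (G : Type*) [AddCommGroup G] [TopologicalSpace G] [IsTopologicalAddGroup G]

section Aux

variable {G}

lemma circle_exp_pow (t : ℝ) (k : ℕ) : Circle.exp t ^ k = Circle.exp (k * t) := by
  induction k with
  | zero => simp [Circle.exp_zero]
  | succ k ih => rw [pow_succ, ih, ← Circle.exp_add]; congr 1; push_cast; ring

lemma circle_re_exp (t : ℝ) : ((Circle.exp t : Circle) : ℂ).re = Real.cos t := by
  rw [Circle.coe_exp]; simp [Complex.exp_ofReal_mul_I_re]

lemma splus_inv {z : Circle} (hz : z ∈ Splus) : z⁻¹ ∈ Splus := by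
  have h : ((z⁻¹ : Circle) : ℂ) = ((z : ℂ))⁻¹ := by exact_mod_cast rfl
  simp only [Splus, Set.mem_setOf_eq] at *
  rw [h, Complex.inv_re]
  exact div_nonneg hz (Complex.normSq_nonneg _)

lemma char_zero {χ : G → Circle} (hχ : IsChar G χ) : χ 0 = 1 := by
  have := hχ.2 0 0
  rw [add_zero] at this
  exact (mul_right_cancel (a := 1) (by rw [one_mul, ← this])).symm

lemma char_nsmul {χ : G → Circle} (hχ : IsChar G χ) (k : ℕ) (g : G) :
    χ (k • g) = χ g ^ k := by
  induction k with
  | zero => simpa using char_zero hχ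
  | succ k ih => rw [succ_nsmul, hχ.2, ih, pow_succ]

lemma char_neg {χ : G → Circle} (hχ : IsChar G χ) (g : G) : χ (-g) = (χ g)⁻¹ := by
  have := hχ.2 g (-g)
  rw [add_neg_cancel, char_zero hχ] at this
  exact (eq_inv_of_mul_eq_one_right this.symm)

/-- real-analysis key lemma: if `cos (k t) ≥ 0` for `k = 1, …, m` and `|t| ≤ π`,
then `|t| ≤ π / (2m)`. -/
lemma cos_bound {m : ℕ} (hm : 0 < m) {t : ℝ} (ht : |t| ≤ π)
    (h : ∀ k : ℕ, 1 ≤ k → k ≤ m → 0 ≤ Real.cos (k * t)) : |t| ≤ π / (2 * m) := by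
  by_contra h'
  push_neg at h'
  set s := |t| with hs
  have hcos : ∀ k : ℕ, 1 ≤ k → k ≤ m → 0 ≤ Real.cos (k * s) := by
    intro k hk1 hk2
    have : Real.cos (k * s) = Real.cos (k * t) := by
      rcases abs_cases t with ⟨h1, _⟩ | ⟨h1, _⟩
      · rw [hs, h1]
      · rw [hs, h1, mul_neg, Real.cos_neg]
    rw [this]; exact h k hk1 hk2
  have hspos : 0 < s := lt_trans (by positivity) h'
  have hs2 : s ≤ π / 2 := by
    by_contra h2
    push_neg at h2
    have := Real.cos_neg_of_pi_div_two_lt_of_lt h2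
      (lt_of_le_of_lt ht (by linarith [Real.pi_pos]))
    have h0 := hcos 1 le_rfl hm
    rw [Nat.cast_one, one_mul] at h0
    linarith
  set k : ℕ := Nat.floor (π / (2 * s)) + 1 with hk
  have hfl : (Nat.floor (π / (2 * s)) : ℝ) ≤ π / (2 * s) := Nat.floor_le (by positivity)
  have hk1 : π / 2 < k * s := by
    have hflt : π / (2 * s) < (k : ℝ) := by
      rw [hk]; push_cast; exact Nat.lt_floor_add_one _
    calc π / 2 = (π / (2 * s)) * s := by field_simp
    _ < k * s := by exact mul_lt_mul_of_pos_right hflt hspos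
  have hk2 : (k : ℝ) * s ≤ π := by
    have : (k : ℝ) * s = (Nat.floor (π / (2 * s)) : ℝ) * s + s := by
      rw [hk]; push_cast; ring
    rw [this]
    have : (Nat.floor (π / (2 * s)) : ℝ) * s ≤ π / 2 := by
      calc (Nat.floor (π / (2 * s)) : ℝ) * s ≤ (π / (2 * s)) * s :=
        mul_le_mul_of_nonneg_right hfl hspos.le
      _ = π / 2 := by field_simp
    linarith
  have hkm : k ≤ m := by
    have hlt : π / (2 * s) < m := by
      rw [div_lt_iff₀ (by positivity)]
      have := h'  -- π / (2 * m) < s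
      rw [div_lt_iff₀ (by positivity)] at this
      linarith [this]
    have : Nat.floor (π / (2 * s)) < m := Nat.floor_lt (by positivity) |>.mpr hlt
    omega
  have hneg : Real.cos (k * s) < 0 :=
    Real.cos_neg_of_pi_div_two_lt_of_lt hk1 (lt_of_le_of_lt hk2 (by linarith [Real.pi_pos]))
  linarith [hcos k (by omega) hkm]

/-- If all powers `z^k`, `k = 1, …, m`, lie in `S₊`, then `|arg z| ≤ π / (2m)`. -/
lemma arg_small {m : ℕ} (hm : 0 < m) {z : Circle}
    (h : ∀ k : ℕ, 1 ≤ k → k ≤ m → z ^ k ∈ Splus) : |Complex.arg z| ≤ π / (2 * m) := by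
  apply cos_bound hm (Complex.abs_arg_le_pi _)
  intro k hk1 hk2
  have hz : z = Circle.exp (Complex.arg z) := (Circle.exp_arg z).symm
  have := h k hk1 hk2
  rwa [hz, circle_exp_pow, Splus, Set.mem_setOf_eq, circle_re_exp] at this

/-- Part (b), as a standalone lemma. -/
lemma seg_add_seg {C : Set G} (hC : C = invPolar G (polarG G C)) (n : ℕ) (hn : 0 < n) :
    seg G (2 * n) C + seg G (2 * n) C ⊆ seg G n C := by
  rintro x ⟨g, hg, h, hh, rfl⟩
  intro k hk
  rw [Finset.mem_Icc] at hk
  rw [hC]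
  intro χ hχ
  have key : ∀ y : G, y ∈ seg G (2 * n) C → |Complex.arg (χ y)| ≤ π / (4 * n) := by
    intro y hy
    have h2 := arg_small (m := 2 * n) (z := χ y) (by omega) ?_
    · have h4 : (2:ℝ) * ((2 * n : ℕ) : ℝ) = 4 * n := by push_cast; ring
      rwa [h4] at h2
    · intro j hj1 hj2
      rw [← char_nsmul hχ.1]
      exact hχ.2 _ (hy j (Finset.mem_Icc.mpr ⟨hj1, hj2⟩))
  have ha := key g hg
  have hb := key h hh
  set a := Complex.arg (χ g) with hA
  set b := Complex.arg (χ h) with hB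
  have heq : χ (k • (g + h)) = Circle.exp (k * (a + b)) := by
    rw [smul_add, hχ.1.2, char_nsmul hχ.1, char_nsmul hχ.1,
      ← Circle.exp_arg (χ g), ← Circle.exp_arg (χ h), circle_exp_pow, circle_exp_pow,
      ← Circle.exp_add]
    congr 1; rw [hA, hB]; ring
  rw [heq, Splus, Set.mem_setOf_eq, circle_re_exp]
  apply Real.cos_nonneg_of_mem_Icc
  have hkn : (k : ℝ) ≤ n := by exact_mod_cast hk.2
  have hknn : (0:ℝ) ≤ k := by positivity
  have habs : |(k : ℝ) * (a + b)| ≤ π / 2 := by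
    rw [abs_mul, _root_.abs_of_nonneg hknn]
    have h1 : |a + b| ≤ π / (4 * n) + π / (4 * n) :=
      (abs_add_le a b).trans (add_le_add ha hb)
    have hnp : (0:ℝ) < n := by exact_mod_cast hn
    calc (k : ℝ) * |a + b| ≤ (n : ℝ) * (π / (4 * n) + π / (4 * n)) := by
          apply mul_le_mul hkn h1 (abs_nonneg _) hnp.le
      _ = π / 2 := by field_simp; ring
  rw [abs_le] at habs
  constructor <;> linarith [habs.1, habs.2]

lemma neg_mem_of_qc {C : Set G} (hC : C = invPolar G (polarG G C)) {x : G} (hx : x ∈ C) :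
    -x ∈ C := by
  rw [hC]
  intro χ hχ
  rw [char_neg hχ.1]
  exact splus_inv (hχ.2 x hx)

lemma zero_mem_of_qc {C : Set G} (hC : C = invPolar G (polarG G C)) : (0 : G) ∈ C := by
  rw [hC]
  intro χ hχ
  rw [char_zero hχ.1]
  simp [Splus]

end Aux

theorem stmt6 (C : Set G) (hC : C = invPolar G (polarG G C)) (n : ℕ) (hn : 0 < n) :
    seg G n C = invPolar G (polarG G (seg G n C)) ∧
      seg G (2 * n) C + seg G (2 * n) C ⊆ seg G n C ∧
      ∃ H : AddSubgroup G, (H : Set G) = ⋂ (m : ℕ) (_ : 0 < m), seg G m C := by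
  refine ⟨?_, seg_add_seg hC n hn, ?_⟩
  · ext g
    constructor
    · intro hg χ hχ
      exact hχ.2 g hg
    · intro hg k hk
      rw [hC]
      intro χ hχ
      set ψ : G → Circle := fun x => χ (k • x) with hψ
      have hψchar : IsChar G ψ := by
        constructor
        · exact hχ.1.1.comp (continuous_const_smul k)
        · intro x y
          simp only [hψ, smul_add, hχ.1.2]
      have hψpolar : ψ ∈ polarG G (seg G n C) := by
        refine ⟨hψchar, fun h hh => ?_⟩
        exact hχ.2 _ (hh k hk)
      exact hg ψ hψpolar
  · refine ⟨{
      carrier := ⋂ (m : ℕ) (_ : 0 < m), seg G m C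
      add_mem' := ?_
      zero_mem' := ?_
      neg_mem' := ?_ }, rfl⟩
    · intro a b ha hb
      rw [Set.mem_iInter₂] at ha hb ⊢
      intro m hm
      exact seg_add_seg hC m hm ⟨a, ha (2 * m) (by omega), b, hb (2 * m) (by omega), rfl⟩
    · rw [Set.mem_iInter₂]
      intro m hm k hk
      rw [smul_zero]
      exact zero_mem_of_qc hC
    · intro a ha
      rw [Set.mem_iInter₂] at ha ⊢
      intro m hm k hk
      rw [smul_neg]
      exact neg_mem_of_qc hC (ha m hm k hk)
end

section
/- Let G be an abelian topological group and K ⊆ Ĝ. Then K is equicontinuous if and only if the inverse polar K^◁ = {g ∈ G : χ(g) ∈ S₊ for all χ ∈ K} is a neighborhood of zero in G. In that case, the quasi-convex hull qc((n)K) in Ĝ is equicontinuous for every positive integer n. -/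
open scoped Pointwise Topology
open Complex Real

variable (G : Type*) [AddCommGroup G] [TopologicalSpace G] [IsTopologicalAddGroup G]

/-- A set of characters is equicontinuous. -/
def Equicont (K : Set (G → Circle)) : Prop :=
  ∀ V ∈ 𝓝 (1 : Circle), ∃ U ∈ 𝓝 (0 : G), ∀ χ ∈ K, ∀ g ∈ U, χ g ∈ V

/-! ### Auxiliary lemmas -/

lemma circle_coe_pow (z : Circle) (k : ℕ) : ((z ^ k : Circle) : ℂ) = (z : ℂ) ^ k := by
  induction k with
  | zero => simp
  | succ k ih => rw [pow_succ, pow_succ, Circle.coe_mul, ih]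

lemma circle_coe_exp (z : Circle) :
    (z : ℂ) = Complex.exp ((Complex.arg (z : ℂ) : ℂ) * Complex.I) := by
  conv_lhs => rw [← Complex.norm_mul_exp_arg_mul_I (z : ℂ)]
  rw [Circle.norm_coe, Complex.ofReal_one, one_mul]

lemma circle_re_eq (z : Circle) : (z : ℂ).re = Real.cos (Complex.arg (z : ℂ)) := by
  rw [Complex.cos_arg (Circle.coe_ne_zero z), Circle.norm_coe, div_one]

lemma circle_pow_re (z : Circle) (k : ℕ) :
    ((z ^ k : Circle) : ℂ).re = Real.cos (k * Complex.arg (z : ℂ)) := by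
  rw [circle_coe_pow]
  conv_lhs => rw [circle_coe_exp z]
  rw [← Complex.exp_nat_mul]
  have : (k : ℂ) * ((Complex.arg (z : ℂ) : ℂ) * Complex.I)
      = ((k * Complex.arg (z : ℂ) : ℝ) : ℂ) * Complex.I := by push_cast; ring
  rw [this, Complex.exp_ofReal_mul_I_re]

/-- The key numerical lemma: if `z, z², …, zⁿ` all lie in `S₊`, then `|arg z| ≤ π/(2n)`. -/
lemma arg_le_of_pow_mem {n : ℕ} (hn : 0 < n) {z : Circle}
    (h : ∀ k ∈ Finset.Icc 1 n, (z ^ k : Circle) ∈ Splus) :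
    |Complex.arg (z : ℂ)| ≤ π / (2 * n) := by
  set θ : ℝ := |Complex.arg (z : ℂ)| with hθ
  have hθ0 : 0 ≤ θ := abs_nonneg _
  have hre : ∀ k ∈ Finset.Icc 1 n, 0 ≤ Real.cos (k * θ) := by
    intro k hk
    have := h k hk
    rw [Splus, Set.mem_setOf_eq, circle_pow_re] at this
    have : Real.cos (|k * Complex.arg (z : ℂ)|) = Real.cos (k * Complex.arg (z : ℂ)) :=
      Real.cos_abs _
    rw [abs_mul, Nat.abs_cast] at this
    have h2 := h k hk
    rw [Splus, Set.mem_setOf_eq, circle_pow_re] at h2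
    rw [hθ]; rw [this]; exact h2
  have hθhalf : θ ≤ π / 2 := by
    by_contra hcon
    push_neg at hcon
    have h1 := hre 1 (Finset.mem_Icc.2 ⟨le_refl 1, hn⟩)
    rw [Nat.cast_one, one_mul] at h1
    have hθπ : θ ≤ π := by
      rw [hθ, abs_le]; exact ⟨le_trans (by linarith [Real.pi_pos]) (Complex.neg_pi_lt_arg _).le,
        Complex.arg_le_pi _⟩
    have : Real.cos θ < 0 := Real.cos_neg_of_pi_div_two_lt_of_lt hcon (by linarith [Real.pi_pos])
    linarith
  by_contra hcon
  push_neg at hcon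
  have hθpos : 0 < θ := lt_of_le_of_lt (by positivity) hcon
  -- there is some k with k * θ > π/2, namely k = n
  have hP : π / 2 < (n : ℝ) * θ := by
    have : π / 2 = n * (π / (2 * n)) := by field_simp
    rw [this]
    exact mul_lt_mul_of_pos_left hcon (by exact_mod_cast hn)
  classical
  have hex : ∃ k : ℕ, π / 2 < (k : ℝ) * θ := ⟨n, hP⟩
  set k := Nat.find hex with hk
  have hkspec : π / 2 < (k : ℝ) * θ := Nat.find_spec hex
  have hkn : k ≤ n := Nat.find_le hP
  have hk1 : 1 ≤ k := by
    by_contra hc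
    push_neg at hc
    interval_cases k
    · simp at hkspec; linarith [Real.pi_pos]
  have hkmin : ¬ (π / 2 < ((k - 1 : ℕ) : ℝ) * θ) := Nat.find_min hex (by omega)
  push_neg at hkmin
  have hcast : ((k - 1 : ℕ) : ℝ) = (k : ℝ) - 1 := by
    have : (1 : ℕ) ≤ k := hk1
    push_cast [Nat.cast_sub this]; ring
  rw [hcast] at hkmin
  have hkθπ : (k : ℝ) * θ ≤ π := by nlinarith
  have : Real.cos ((k : ℝ) * θ) < 0 :=
    Real.cos_neg_of_pi_div_two_lt_of_lt hkspec (by linarith [Real.pi_pos])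
  have := hre k (Finset.mem_Icc.2 ⟨hk1, hkn⟩)
  linarith

lemma IsChar.map_zero' {χ : G → Circle} (h : IsChar G χ) : χ 0 = 1 := by
  have := h.2 0 0
  rw [add_zero] at this
  have h2 : χ 0 * 1 = χ 0 * χ 0 := by rw [mul_one]; exact this
  exact (mul_left_cancel h2).symm

lemma IsChar.map_nsmul {χ : G → Circle} (h : IsChar G χ) (k : ℕ) (g : G) :
    χ (k • g) = (χ g) ^ k := by
  induction k with
  | zero => simpa using h.map_zero' G
  | succ k ih => rw [succ_nsmul, h.2, ih, pow_succ]

lemma splus_mem_nhds : Splus ∈ 𝓝 (1 : Circle) := by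
  have hopen : IsOpen {z : Circle | 0 < (z : ℂ).re} :=
    isOpen_lt continuous_const (Complex.continuous_re.comp continuous_subtype_val)
  refine Filter.mem_of_superset (hopen.mem_nhds (by simp)) (fun z hz => ?_)
  simp only [Splus, Set.mem_setOf_eq]
  exact le_of_lt hz

lemma seg_mem_nhds (n : ℕ) {C : Set G} (hC : C ∈ 𝓝 (0 : G)) : seg G n C ∈ 𝓝 (0 : G) := by
  have : seg G n C = ⋂ k ∈ Finset.Icc 1 n, (fun g : G => k • g) ⁻¹' C := by
    ext g; simp [seg]
  rw [this]
  refine (Filter.biInter_finset_mem _).2 (fun k _ => ?_)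
  have hcont : Continuous (fun g : G => k • g) := continuous_nsmul k
  exact hcont.continuousAt.preimage_mem_nhds (by rw [smul_zero]; exact hC)

/-- Direction: if the inverse polar is a neighborhood of zero, then `K` is equicontinuous. -/
lemma equicont_of_invPolar (K : Set (G → Circle)) (hK : K ⊆ charSet G)
    (h : invPolar G K ∈ 𝓝 (0 : G)) : Equicont G K := by
  intro V hV
  obtain ⟨ε, hε, hball⟩ := Metric.mem_nhds_iff.1 hV
  obtain ⟨n, hn⟩ := exists_nat_gt (max 4 (2 * π / ε))
  have hn4 : (4 : ℝ) < n := lt_of_le_of_lt (le_max_left _ _) hn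
  have hn0 : 0 < n := by exact_mod_cast lt_trans (by norm_num : (0:ℝ) < 4) hn4
  have hnε : 2 * π / ε < n := lt_of_le_of_lt (le_max_right _ _) hn
  refine ⟨seg G n (invPolar G K), seg_mem_nhds G n h, fun χ hχ g hg => ?_⟩
  have hchar : IsChar G χ := hK hχ
  have hpows : ∀ k ∈ Finset.Icc 1 n, ((χ g) ^ k : Circle) ∈ Splus := by
    intro k hk
    have := hg k hk
    have := this χ hχ
    rwa [hchar.map_nsmul G k g] at this
  have harg : |Complex.arg ((χ g : Circle) : ℂ)| ≤ π / (2 * n) := arg_le_of_pow_mem hn0 hpows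
  -- now estimate the distance to 1
  apply hball
  rw [Metric.mem_ball]
  change dist ((χ g : Circle) : ℂ) ((1 : Circle) : ℂ) < ε
  rw [Circle.coe_one, Complex.dist_eq]
  have hcoe := circle_coe_exp (χ g)
  set a : ℝ := Complex.arg ((χ g : Circle) : ℂ) with ha
  have habs : ‖(a : ℂ) * Complex.I‖ = |a| := by
    rw [norm_mul, Complex.norm_I, mul_one, Complex.norm_real, Real.norm_eq_abs]
  have hππ : π / (2 * n) ≤ 1 := by
    rw [div_le_one (by positivity)]
    nlinarith [Real.pi_lt_d2]
  have h1 : ‖(a : ℂ) * Complex.I‖ ≤ 1 := by rw [habs]; exact le_trans harg hππ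
  have h2 : ‖Complex.exp ((a : ℂ) * Complex.I) - 1‖
      ≤ 2 * ‖(a : ℂ) * Complex.I‖ := Complex.norm_exp_sub_one_le h1
  rw [hcoe]
  refine lt_of_le_of_lt h2 ?_
  rw [habs]
  have hεn : 2 * (π / (2 * n)) < ε := by
    rw [div_lt_iff₀ hε] at hnε
    have heq : 2 * (π / (2 * (n:ℝ))) = π / n := by
      field_simp
    rw [heq, div_lt_iff₀ (by positivity : (0:ℝ) < (n:ℝ))]
    nlinarith [Real.pi_pos]
  calc 2 * |a| ≤ 2 * (π / (2 * n)) := by linarith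
  _ < ε := hεn

/-- Direction: if `K` is equicontinuous then so is the inverse polar of `(n)K` near zero. -/
lemma invPolar_mpow_mem_nhds (K : Set (G → Circle)) (hK : K ⊆ charSet G)
    (hEq : Equicont G K) {n : ℕ} (hn : 0 < n) : invPolar G (mpow G K n) ∈ 𝓝 (0 : G) := by
  -- neighborhood of 1 in the circle with small argument
  set c : ℝ := π / (2 * n) with hc
  have hc0 : 0 < c := by positivity
  have hcπ : c ≤ π / 2 := by
    rw [hc, div_le_div_iff₀ (by positivity) (by norm_num)]
    nlinarith [Real.pi_pos, (by exact_mod_cast hn : (1:ℝ) ≤ n)]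
  have hcos1 : Real.cos c < 1 := by
    have := Real.strictAntiOn_cos (Set.mem_Icc.2 ⟨le_refl (0:ℝ), Real.pi_pos.le⟩)
      (Set.mem_Icc.2 ⟨hc0.le, by linarith [Real.pi_pos]⟩) hc0
    simpa using this
  set V : Set Circle := {z | Real.cos c < (z : ℂ).re} with hV
  have hVnhds : V ∈ 𝓝 (1 : Circle) := by
    have hopen : IsOpen V :=
      isOpen_lt continuous_const (Complex.continuous_re.comp continuous_subtype_val)
    exact hopen.mem_nhds (by simp [hV, hcos1])
  obtain ⟨U, hU, hUsub⟩ := hEq V hVnhds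
  -- elements of V have small argument
  have hargV : ∀ z : Circle, z ∈ V → |Complex.arg (z : ℂ)| ≤ c := by
    intro z hz
    rw [hV, Set.mem_setOf_eq, circle_re_eq] at hz
    by_contra hcon
    push_neg at hcon
    have h1 : |Complex.arg (z : ℂ)| ≤ π := by
      rw [abs_le]
      exact ⟨le_trans (by linarith [Real.pi_pos]) (Complex.neg_pi_lt_arg _).le,
        Complex.arg_le_pi _⟩
    have := Real.strictAntiOn_cos (Set.mem_Icc.2 ⟨le_of_lt hc0, by linarith [Real.pi_pos]⟩)
      (Set.mem_Icc.2 ⟨abs_nonneg _, h1⟩) hcon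
    rw [Real.cos_abs] at this
    linarith
  -- products of m elements of K have argument ≤ m * c on U
  have key : ∀ m : ℕ, ∀ χ ∈ mpow G K m, ∀ g ∈ U,
      ∃ θ : ℝ, |θ| ≤ m * c ∧ ((χ g : Circle) : ℂ) = Complex.exp ((θ : ℂ) * Complex.I) := by
    intro m
    induction m with
    | zero =>
      intro χ hχ g _
      rw [mpow, Set.mem_singleton_iff] at hχ
      subst hχ
      exact ⟨0, by simp, by simp⟩
    | succ m ih =>
      intro χ hχ g hg
      rw [mpow] at hχ
      obtain ⟨χ', hχ', ψ, hψ, rfl⟩ := hχ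
      obtain ⟨θ, hθ, hexp⟩ := ih χ' hχ' g hg
      have hψg : ψ g ∈ V := hUsub ψ hψ g hg
      obtain ⟨b, hb, hψcoe⟩ : ∃ b : ℝ, |b| ≤ c ∧
          ((ψ g : Circle) : ℂ) = Complex.exp ((b : ℂ) * Complex.I) :=
        ⟨Complex.arg ((ψ g : Circle) : ℂ), hargV _ hψg, circle_coe_exp _⟩
      refine ⟨θ + b, ?_, ?_⟩
      · calc |θ + b| ≤ |θ| + |b| := abs_add_le _ _
        _ ≤ m * c + c := add_le_add hθ hb
        _ = ((m + 1 : ℕ) : ℝ) * c := by push_cast; ring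
      · have hsplit : ((χ' * ψ) g : ℂ) = ((χ' g : Circle) : ℂ) * ((ψ g : Circle) : ℂ) := rfl
        rw [hsplit, hexp, hψcoe, ← Complex.exp_add]
        congr 1
        push_cast
        ring
  -- conclude
  refine Filter.mem_of_superset hU (fun g hg => ?_)
  intro χ hχ
  obtain ⟨θ, hθ, hexp⟩ := key n χ hχ g hg
  have hθ2 : |θ| ≤ π / 2 := by
    rw [hc] at hθ
    calc |θ| ≤ n * (π / (2 * n)) := hθ
    _ = π / 2 := by field_simp
  rw [Splus, Set.mem_setOf_eq, hexp, Complex.exp_ofReal_mul_I_re]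
  have := Real.cos_abs θ
  rw [← this]
  exact Real.cos_nonneg_of_mem_Icc (Set.mem_Icc.2 ⟨by linarith [abs_nonneg θ], hθ2⟩)

theorem stmt10 (K : Set (G → Circle)) (hK : K ⊆ charSet G) :
    (Equicont G K ↔ invPolar G K ∈ 𝓝 (0 : G)) ∧
      (Equicont G K → ∀ n : ℕ, 0 < n →
        Equicont G (polarG G (invPolar G (mpow G K n)))) := by
  constructor
  · constructor
    · intro hEq
      obtain ⟨U, hU, hUsub⟩ := hEq Splus (splus_mem_nhds)
      exact Filter.mem_of_superset hU (fun g hg χ hχ => hUsub χ hχ g hg)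
    · exact equicont_of_invPolar G K hK
  · intro hEq n hn
    set A := invPolar G (mpow G K n) with hA
    have hAnhds : A ∈ 𝓝 (0 : G) := invPolar_mpow_mem_nhds G K hK hEq hn
    apply equicont_of_invPolar G _ (fun χ hχ => hχ.1)
    refine Filter.mem_of_superset hAnhds (fun g hg => ?_)
    intro χ hχ
    exact hχ.2 g hg
end

section
/- Let (G, τ) and (H, ν) be MAP abelian topological groups and p : H → G a continuous surjective homomorphism such that τ is compatible with the quotient topology ν/ker(p) (i.e., they have the same continuous characters). Then the adjoint map p* : (Ĝ, σ(Ĝ,G)) → (Ĥ, σ(Ĥ,H)), p*(χ) = χ∘p, is a topological embedding whose image p*(Ĝ) is a closed subgroup of (Ĥ, σ(Ĥ,H)). -/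
open scoped Pointwise Topology
open Complex Real

variable (G : Type*) [AddCommGroup G] [TopologicalSpace G] [IsTopologicalAddGroup G]

lemma char_eq_of_eq {G H : Type*} [AddCommGroup G] [AddCommGroup H]
    (η : H → Circle) (hom : ∀ x y : H, η (x + y) = η x * η y)
    (p : H →+ G) (hker : ∀ h : H, p h = 0 → η h = 1)
    {a b : H} (hab : p a = p b) : η a = η b := by
  have h0 : η (b - a) = 1 := hker _ (by simp [map_sub, hab])
  have : η (a + (b - a)) = η a * η (b - a) := hom a (b - a)
  simpa [h0] using this.symm

theorem stmt14' (G : Type*) [AddCommGroup G] [TopologicalSpace G] [IsTopologicalAddGroup G]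
    {H : Type*} [AddCommGroup H] [TopologicalSpace H] [IsTopologicalAddGroup H]
    (sepG : ∀ g : G, g ≠ 0 → ∃ χ : G → Circle, IsChar G χ ∧ χ g ≠ 1)
    (sepH : ∀ h : H, h ≠ 0 → ∃ χ : H → Circle, IsChar H χ ∧ χ h ≠ 1)
    (p : H →+ G) (hpc : Continuous p) (hps : Function.Surjective p)
    (hcompat : ∀ χ : G → Circle, (∀ x y : G, χ (x + y) = χ x * χ y) →
      (Continuous χ ↔ Continuous (χ ∘ p)))
    (Φ : {χ : G → Circle // IsChar G χ} → {η : H → Circle // IsChar H η})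
    (hΦ : ∀ (χ : {χ : G → Circle // IsChar G χ}) (h : H), (Φ χ).1 h = χ.1 (p h)) :
    Topology.IsEmbedding Φ ∧ IsClosed (Set.range Φ) := by
  -- a section of p
  set s : G → H := Function.surjInv hps with hs
  have hps' : ∀ g, p (s g) = g := Function.surjInv_eq hps
  -- continuity of Φ
  have hΦval : (Subtype.val ∘ Φ) = fun χ : {χ : G → Circle // IsChar G χ} =>
      (fun h : H => χ.1 (p h)) := by
    funext χ h; exact hΦ χ h
  have hcont : Continuous Φ := by
    rw [continuous_induced_rng, hΦval]
    exact continuous_pi fun h => (continuous_apply (p h)).comp continuous_subtype_val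
  -- retraction r
  set r : (H → Circle) → (G → Circle) := fun η g => η (s g) with hr
  have hrcont : Continuous r := continuous_pi fun g => continuous_apply (s g)
  have hretr : (r ∘ Subtype.val ∘ Φ) = (Subtype.val :
      {χ : G → Circle // IsChar G χ} → (G → Circle)) := by
    funext χ g
    simp only [Function.comp, hr, hΦ, hps']
  have hind : Topology.IsInducing Φ := by
    have h1 : Topology.IsInducing (Subtype.val ∘ Φ) := by
      refine Topology.IsInducing.of_comp ?_ hrcont ?_
      · exact continuous_subtype_val.comp hcont
      · rw [hretr]; exact Topology.IsInducing.subtypeVal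
    exact Topology.IsInducing.of_comp hcont continuous_subtype_val h1
  have hinj : Function.Injective Φ := by
    intro χ χ' hEq
    apply Subtype.ext; funext g
    have := congrArg Subtype.val hEq
    have h1 : (Φ χ).1 (s g) = (Φ χ').1 (s g) := by rw [this]
    rwa [hΦ, hΦ, hps'] at h1
  refine ⟨⟨hind, hinj⟩, ?_⟩
  have hrange : Set.range Φ =
      {η : {η : H → Circle // IsChar H η} | ∀ h : H, p h = 0 → η.1 h = 1} := by
    ext η
    constructor
    · rintro ⟨χ, rfl⟩ h hh
      have h0 : χ.1 0 = 1 := by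
        have h1 : χ.1 0 * χ.1 0 = χ.1 0 := by simpa using (χ.2.2 0 0).symm
        exact mul_eq_left.mp h1
      rw [hΦ, hh, h0]
    · intro hη
      set χ : G → Circle := fun g => η.1 (s g) with hχ
      have hker : ∀ h : H, p h = 0 → η.1 h = 1 := hη
      have key : ∀ a b : H, p a = p b → η.1 a = η.1 b :=
        fun a b hab => char_eq_of_eq η.1 η.2.2 p hker hab
      have hhom : ∀ x y : G, χ (x + y) = χ x * χ y := by
        intro x y
        have : η.1 (s (x + y)) = η.1 (s x + s y) :=
          key _ _ (by simp [hps'])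
        show η.1 (s (x+y)) = η.1 (s x) * η.1 (s y)
        rw [this, η.2.2]
      have hcp : (χ ∘ p) = η.1 := by
        funext h
        exact key _ _ (by simp [hps'])
      have hχcont : Continuous χ := (hcompat χ hhom).mpr (hcp ▸ η.2.1)
      refine ⟨⟨χ, hχcont, hhom⟩, ?_⟩
      apply Subtype.ext; funext h
      rw [hΦ]
      exact key _ _ (by simp [hps'])
  rw [hrange]
  have : {η : {η : H → Circle // IsChar H η} | ∀ h : H, p h = 0 → η.1 h = 1} =
      ⋂ h ∈ {h : H | p h = 0}, {η : {η : H → Circle // IsChar H η} | η.1 h = 1} := by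
    ext η; simp
  rw [this]
  refine isClosed_biInter fun h _ => ?_
  exact isClosed_eq (((continuous_apply h).comp continuous_subtype_val)) continuous_const

theorem stmt14 {H : Type*} [AddCommGroup H] [TopologicalSpace H] [IsTopologicalAddGroup H]
    (sepG : ∀ g : G, g ≠ 0 → ∃ χ : G → Circle, IsChar G χ ∧ χ g ≠ 1)
    (sepH : ∀ h : H, h ≠ 0 → ∃ χ : H → Circle, IsChar H χ ∧ χ h ≠ 1)
    (p : H →+ G) (hpc : Continuous p) (hps : Function.Surjective p)
    (hcompat : ∀ χ : G → Circle, (∀ x y : G, χ (x + y) = χ x * χ y) →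
      (Continuous χ ↔ Continuous (χ ∘ p)))
    (Φ : {χ : G → Circle // IsChar G χ} → {η : H → Circle // IsChar H η})
    (hΦ : ∀ (χ : {χ : G → Circle // IsChar G χ}) (h : H), (Φ χ).1 h = χ.1 (p h)) :
    Topology.IsEmbedding Φ ∧ IsClosed (Set.range Φ) :=
  stmt14' G sepG sepH p hpc hps hcompat Φ hΦ
end
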